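/- arXiv:1205.3703 — 2 statements merged into one kernel-verified Lean document; each statement's English description precedes it below -/
import Mathlib

section
/- Suppose for fixed constants λ* > 0, K* ≥ 0, and for every M > 0 and t > 0, P( sup_{‖θ-θ*‖₁≤M} |Y(θ,θ*)| ≥ (λ* M / e)(1 + K*[√(t/log p) + t/n]) ) ≤ 6 e^{-t}. Then for any fixed M̄ > 0 and all t > 0, P( sup_{‖θ-θ*‖₁≤M̄} |Y(θ,θ*)| / (‖θ-θ*‖₁ ∨ e^{-(p-1)}M̄) ≥ λ*(1 + K*[√((t+log p)/log p) + (t+log p)/n]) ) ≤ 6 e^{-t}. -/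
set_option maxHeartbeats 1000000


open Finset MeasureTheory

/-- The peeling device: a fixed-radius tail bound over all `ℓ₁`-balls yields a
tail bound for the process normalized by `‖θ - θ*‖₁ ∨ e^{-(p-1)} M̄`. -/
theorem peeling_device {Ω : Type*} [MeasurableSpace Ω]
    (μ : Measure Ω) [IsProbabilityMeasure μ]
    {p n : ℕ} (hp : 1 ≤ p) (hn : 0 < n)
    (Y : (Fin p → ℝ) → Ω → ℝ) (θstar : Fin p → ℝ)
    {lam K : ℝ} (hlam : 0 < lam) (hK : 0 ≤ K)
    (h : ∀ M : ℝ, 0 < M → ∀ t : ℝ, 0 < t →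
      μ {ω | lam * M / Real.exp 1 *
              (1 + K * (Real.sqrt (t / Real.log p) + t / n))
            ≤ sSup {x : ℝ | ∃ θ : Fin p → ℝ,
                (∑ j, |θ j - θstar j|) ≤ M ∧ x = |Y θ ω|}}
        ≤ ENNReal.ofReal (6 * Real.exp (-t))) :
    ∀ Mbar : ℝ, 0 < Mbar → ∀ t : ℝ, 0 < t →
      μ {ω | lam * (1 + K * (Real.sqrt ((t + Real.log p) / Real.log p)
                + (t + Real.log p) / n))
            ≤ sSup {x : ℝ | ∃ θ : Fin p → ℝ,
                (∑ j, |θ j - θstar j|) ≤ Mbar ∧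
                x = |Y θ ω| /
                  max (∑ j, |θ j - θstar j|) (Real.exp (-((p : ℝ) - 1)) * Mbar)}}
        ≤ ENNReal.ofReal (6 * Real.exp (-t)) := by
  intro Mbar hMbar t ht
  have hp0 : (0:ℝ) < p := by exact_mod_cast Nat.lt_of_lt_of_le Nat.zero_lt_one hp
  have hp1 : (1:ℝ) ≤ p := by exact_mod_cast hp
  have hlp0 : 0 ≤ Real.log p := Real.log_nonneg hp1
  have ht' : 0 < t + Real.log p := by linarith
  set A : ℝ := Real.sqrt ((t + Real.log p) / Real.log p) + (t + Real.log p) / n with hA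
  have hA0 : 0 ≤ A := by
    have h1 : 0 ≤ Real.sqrt ((t + Real.log p) / Real.log p) := Real.sqrt_nonneg _
    have h2 : 0 ≤ (t + Real.log p) / n := div_nonneg ht'.le (Nat.cast_nonneg n)
    rw [hA]; linarith
  set c : ℝ := lam * (1 + K * A) with hc_def
  have hc : 0 < c := mul_pos hlam (by nlinarith)
  -- the shell radii
  set Mj : ℕ → ℝ := fun j => Real.exp (-(j:ℝ)) * Mbar with hMj
  have hMjpos : ∀ j : ℕ, 0 < Mj j := fun j => mul_pos (Real.exp_pos _) hMbar
  -- the shell tail sets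
  set T : ℕ → Ω → Set ℝ := fun j ω => {x : ℝ | ∃ θ : Fin p → ℝ,
      (∑ j', |θ j' - θstar j'|) ≤ Mj j ∧ x = |Y θ ω|} with hT
  set F : ℕ → Set Ω := fun j => {ω | lam * Mj j / Real.exp 1 *
      (1 + K * (Real.sqrt ((t + Real.log p) / Real.log p) + (t + Real.log p) / n))
      ≤ sSup (T j ω)} with hF
  set S : Ω → Set ℝ := fun ω => {x : ℝ | ∃ θ : Fin p → ℝ,
      (∑ j, |θ j - θstar j|) ≤ Mbar ∧
      x = |Y θ ω| / max (∑ j, |θ j - θstar j|) (Real.exp (-((p : ℝ) - 1)) * Mbar)} with hS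
  have hne : (Finset.range p).Nonempty := ⟨0, Finset.mem_range.mpr hp⟩
  have hemin : 0 < Real.exp (-((p : ℝ) - 1)) * Mbar := mul_pos (Real.exp_pos _) hMbar
  have hsub : {ω | c ≤ sSup (S ω)} ⊆ ⋃ j ∈ Finset.range p, F j := by
    intro ω hω
    simp only [Set.mem_setOf_eq] at hω
    -- S ω nonempty
    have hzero : (∑ j, |θstar j - θstar j|) = 0 := by simp
    have hSne : (S ω).Nonempty := by
      refine ⟨|Y θstar ω| / max (∑ j, |θstar j - θstar j|)
        (Real.exp (-((p : ℝ) - 1)) * Mbar), θstar, by rw [hzero]; exact hMbar.le, rfl⟩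
    -- S ω bounded above
    have hbddS : BddAbove (S ω) := by
      by_contra hb
      rw [Real.sSup_of_not_bddAbove hb] at hω
      exact absurd (lt_of_lt_of_le hc hω) (lt_irrefl 0)
    obtain ⟨b, hb⟩ := hbddS
    have hb' : ∀ x ∈ S ω, x ≤ b := fun x hx => hb hx
    -- T j ω nonempty and bounded above
    have hTne : ∀ j : ℕ, |Y θstar ω| ∈ T j ω := by
      intro j
      exact ⟨θstar, by rw [hzero]; exact (hMjpos j).le, rfl⟩
    have hTbdd : ∀ j : ℕ, BddAbove (T j ω) := by
      intro j
      refine ⟨|b| * Mbar, fun y hy => ?_⟩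
      obtain ⟨θ, hθ, rfl⟩ := hy
      have hjle : Mj j ≤ Mbar := by
        have : Real.exp (-(j:ℝ)) ≤ 1 := Real.exp_le_one_iff.mpr (neg_nonpos.mpr (Nat.cast_nonneg j))
        calc Mj j = Real.exp (-(j:ℝ)) * Mbar := rfl
          _ ≤ 1 * Mbar := by nlinarith
          _ = Mbar := one_mul _
      have hθM : (∑ j', |θ j' - θstar j'|) ≤ Mbar := hθ.trans hjle
      set N : ℝ := max (∑ j', |θ j' - θstar j'|) (Real.exp (-((p : ℝ) - 1)) * Mbar) with hNdef
      have hN0 : 0 < N := lt_max_of_lt_right hemin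
      have hNM : N ≤ Mbar := by
        apply max_le hθM
        have : Real.exp (-((p : ℝ) - 1)) ≤ 1 := Real.exp_le_one_iff.mpr (by linarith)
        nlinarith
      have hmem : |Y θ ω| / N ∈ S ω := ⟨θ, hθM, rfl⟩
      have := hb' _ hmem
      have hy2 : |Y θ ω| ≤ b * N := (div_le_iff₀ hN0).mp this
      calc |Y θ ω| ≤ b * N := hy2
        _ ≤ |b| * N := by nlinarith [le_abs_self b, hN0.le]
        _ ≤ |b| * Mbar := by nlinarith [abs_nonneg b]
    have hTsup0 : ∀ j : ℕ, 0 ≤ sSup (T j ω) :=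
      fun j => le_trans (abs_nonneg _) (le_csSup (hTbdd j) (hTne j))
    -- the finite max
    set g : ℕ → ℝ := fun j => Real.exp 1 * sSup (T j ω) / Mj j with hg
    set B : ℝ := (Finset.range p).sup' hne g with hB
    have hSB : sSup (S ω) ≤ B := by
      apply csSup_le hSne
      rintro x ⟨θ, hθ, rfl⟩
      set N : ℝ := max (∑ j, |θ j - θstar j|) (Real.exp (-((p : ℝ) - 1)) * Mbar) with hNdef
      have hN0 : 0 < N := lt_max_of_lt_right hemin
      have hNM : N ≤ Mbar := by
        apply max_le hθ
        have : Real.exp (-((p : ℝ) - 1)) ≤ 1 := Real.exp_le_one_iff.mpr (by linarith)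
        nlinarith
      have hNge : Real.exp (-((p : ℝ) - 1)) * Mbar ≤ N := le_max_right _ _
      have hr1 : (1:ℝ) ≤ Mbar / N := (one_le_div hN0).mpr hNM
      set j : ℕ := ⌊Real.log (Mbar / N)⌋₊ with hjdef
      have hlogr0 : 0 ≤ Real.log (Mbar / N) := Real.log_nonneg hr1
      have hjle : (j:ℝ) ≤ Real.log (Mbar / N) := Nat.floor_le hlogr0
      have hjgt : Real.log (Mbar / N) < (j:ℝ) + 1 := Nat.lt_floor_add_one _
      have hjp : j < p := by
        have hrle : Mbar / N ≤ Real.exp ((p:ℝ) - 1) := by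
          rw [div_le_iff₀ hN0]
          calc Mbar = Real.exp ((p:ℝ) - 1) * (Real.exp (-((p : ℝ) - 1)) * Mbar) := by
                rw [← mul_assoc, ← Real.exp_add]; simp
            _ ≤ Real.exp ((p:ℝ) - 1) * N := by nlinarith [Real.exp_pos ((p:ℝ) - 1)]
        have hlog : Real.log (Mbar / N) ≤ (p:ℝ) - 1 := by
          calc Real.log (Mbar / N) ≤ Real.log (Real.exp ((p:ℝ) - 1)) :=
                Real.log_le_log (by linarith) hrle
            _ = (p:ℝ) - 1 := Real.log_exp _
        have : (j:ℝ) ≤ (p:ℝ) - 1 := le_trans hjle hlog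
        have : (j:ℝ) < (p:ℝ) := by linarith
        exact_mod_cast this
      -- N ≤ Mj j
      have hNMj : N ≤ Mj j := by
        have h1 : Real.exp (j:ℝ) ≤ Mbar / N := by
          calc Real.exp (j:ℝ) ≤ Real.exp (Real.log (Mbar / N)) := Real.exp_le_exp.mpr hjle
            _ = Mbar / N := Real.exp_log (by linarith)
        have h2 : Real.exp (j:ℝ) * N ≤ Mbar := (le_div_iff₀ hN0).mp h1
        calc N = Real.exp (-(j:ℝ)) * (Real.exp (j:ℝ) * N) := by
              rw [← mul_assoc, ← Real.exp_add]; simp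
          _ ≤ Real.exp (-(j:ℝ)) * Mbar := by nlinarith [Real.exp_pos (-(j:ℝ))]
      -- Mj j ≤ e * N
      have hMjN : Mj j ≤ Real.exp 1 * N := by
        have h1 : Mbar / N < Real.exp ((j:ℝ) + 1) := by
          calc Mbar / N = Real.exp (Real.log (Mbar / N)) := (Real.exp_log (by linarith)).symm
            _ < Real.exp ((j:ℝ) + 1) := Real.exp_lt_exp.mpr hjgt
        have h2 : Mbar < Real.exp ((j:ℝ) + 1) * N := (div_lt_iff₀ hN0).mp h1
        have h3 : Real.exp (-(j:ℝ)) * Real.exp ((j:ℝ) + 1) = Real.exp 1 := by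
          rw [← Real.exp_add]; ring_nf
        calc Mj j = Real.exp (-(j:ℝ)) * Mbar := rfl
          _ ≤ Real.exp (-(j:ℝ)) * (Real.exp ((j:ℝ) + 1) * N) := by
              nlinarith [Real.exp_pos (-(j:ℝ))]
          _ = Real.exp 1 * N := by rw [← mul_assoc, h3]
      -- |Y θ ω| ∈ T j ω
      have hmemT : |Y θ ω| ∈ T j ω := ⟨θ, le_trans (le_max_left _ _) hNMj, rfl⟩
      have hYle : |Y θ ω| ≤ sSup (T j ω) := le_csSup (hTbdd j) hmemT
      have hgj : |Y θ ω| / N ≤ g j := by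
        rw [hg, div_le_div_iff₀ hN0 (hMjpos j)]
        nlinarith [hTsup0 j, hMjpos j, Real.exp_pos 1]
      exact le_trans hgj (Finset.le_sup' g (Finset.mem_range.mpr hjp))
    have hcB : c ≤ B := le_trans hω hSB
    obtain ⟨j, hjmem, hjeq⟩ := Finset.exists_mem_eq_sup' hne g
    rw [hB, hjeq] at hcB
    refine Set.mem_biUnion hjmem ?_
    simp only [hF, Set.mem_setOf_eq]
    have h1 : c * Mj j ≤ Real.exp 1 * sSup (T j ω) := by
      rw [hg, le_div_iff₀ (hMjpos j)] at hcB
      linarith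
    have h2 : lam * Mj j / Real.exp 1 * (1 + K * A) = c * Mj j / Real.exp 1 := by
      rw [hc_def]; ring
    rw [← hA, h2, div_le_iff₀ (Real.exp_pos 1)]
    nlinarith [Real.exp_pos 1]
  -- probability bound
  calc μ {ω | c ≤ sSup (S ω)} ≤ μ (⋃ j ∈ Finset.range p, F j) := measure_mono hsub
    _ ≤ ∑ j ∈ Finset.range p, μ (F j) := measure_biUnion_finset_le _ _
    _ ≤ ∑ j ∈ Finset.range p, ENNReal.ofReal (6 * Real.exp (-(t + Real.log p))) := by
        refine Finset.sum_le_sum fun j _ => ?_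
        exact h (Mj j) (hMjpos j) (t + Real.log p) ht'
    _ = (p : ENNReal) * ENNReal.ofReal (6 * Real.exp (-(t + Real.log p))) := by
        rw [Finset.sum_const, Finset.card_range, nsmul_eq_mul]
    _ = ENNReal.ofReal (6 * Real.exp (-t)) := by
        rw [← ENNReal.ofReal_natCast, ← ENNReal.ofReal_mul (Nat.cast_nonneg p)]
        congr 1
        have hep : Real.exp (-Real.log p) = (p:ℝ)⁻¹ := by
          rw [Real.exp_neg, Real.exp_log hp0]
        have hpne : (p:ℝ) ≠ 0 := ne_of_gt hp0
        rw [neg_add, Real.exp_add, hep]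
        field_simp
end

section
/- Under the assumptions of the previous basic-inequality lemma, and additionally assuming the margin condition E(θ;θ₀) ≥ G(τ(θ - θ⁰)) and the compatibility bound ‖θ̂_{S₀} - θ⁰‖₁ ≤ Γ(L,S₀)·τ(θ̂ - θ⁰) with L = (λ+λ₀)/(λ-λ₀), one has for every 0 < δ < 1: (1-δ) E(θ̂;θ₀) + (λ-λ₀)‖θ̂ - θ⁰‖₁ ≤ δ H(2λΓ(L,S₀)/δ), where H is the convex conjugate of G. -/
open Finset

/-- Oracle inequality at `θ⁰`: combining the Basic Inequality, the margin
condition and the compatibility (effective sparsity) bound yields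
`(1-δ) E(θ̂;θ₀) + (λ-λ₀)‖θ̂-θ⁰‖₁ ≤ δ H(2λΓ(L,S₀)/δ)`. -/
theorem oracle_inequality_theta0 {p : ℕ}
    (θhat θ0 : Fin p → ℝ) (S0 : Finset (Fin p))
    (hsupp : ∀ j ∉ S0, θ0 j = 0)
    (E Y lam lam0 : ℝ) (hE : 0 ≤ E) (hlam0 : 0 < lam0) (hlam : lam0 < lam)
    (hbasic : E + lam * ∑ j, |θhat j| ≤ Y + lam * ∑ j, |θ0 j|)
    (hY : |Y| ≤ lam0 * ∑ j, |θhat j - θ0 j|)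
    (G H : ℝ → ℝ) (τ : (Fin p → ℝ) → ℝ) (hτ : 0 ≤ τ (θhat - θ0))
    -- Fenchel–Young: `H` is the convex conjugate of `G`
    (hFY : ∀ u v : ℝ, 0 ≤ u → 0 ≤ v → u * v ≤ G u + H v)
    -- margin condition at `θ̂`
    (hmargin : G (τ (θhat - θ0)) ≤ E)
    (Γ : ℝ) (hΓ : 0 < Γ)
    -- compatibility bound with `L = (λ+λ₀)/(λ-λ₀)`
    (hcompat : (∑ j ∈ S0, |θhat j - θ0 j|) ≤ Γ * τ (θhat - θ0))
    (δ : ℝ) (hδ0 : 0 < δ) (hδ1 : δ < 1) :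
    (1 - δ) * E + (lam - lam0) * ∑ j, |θhat j - θ0 j|
      ≤ δ * H (2 * lam * Γ / δ) := by
  set t := τ (θhat - θ0) with ht
  set a := ∑ j ∈ S0, |θhat j - θ0 j| with ha
  set b := ∑ j ∈ S0ᶜ, |θhat j - θ0 j| with hb
  have hsplit : ∑ j, |θhat j - θ0 j| = a + b := by
    rw [ha, hb, Finset.sum_add_sum_compl]
  have hhat : ∑ j, |θhat j| = (∑ j ∈ S0, |θhat j|) + b := by
    rw [← Finset.sum_add_sum_compl S0 (fun j => |θhat j|)]
    congr 1
    apply Finset.sum_congr rfl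
    intro j hj
    rw [hsupp j (Finset.mem_compl.mp hj), sub_zero]
  have h0 : ∑ j, |θ0 j| = ∑ j ∈ S0, |θ0 j| := by
    rw [← Finset.sum_add_sum_compl S0 (fun j => |θ0 j|)]
    have : ∑ j ∈ S0ᶜ, |θ0 j| = 0 := by
      apply Finset.sum_eq_zero
      intro j hj
      rw [hsupp j (Finset.mem_compl.mp hj), abs_zero]
    rw [this, add_zero]
  have hdiff : ∑ j ∈ S0, (|θ0 j| - |θhat j|) ≤ a := by
    apply Finset.sum_le_sum
    intro j _
    calc |θ0 j| - |θhat j| ≤ |θ0 j - θhat j| := abs_sub_abs_le_abs_sub _ _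
      _ = |θhat j - θ0 j| := abs_sub_comm _ _
  have hdiff' : ∑ j ∈ S0, (|θ0 j| - |θhat j|)
      = (∑ j ∈ S0, |θ0 j|) - ∑ j ∈ S0, |θhat j| := Finset.sum_sub_distrib _ _
  have hYle : Y ≤ lam0 * (a + b) := by
    calc Y ≤ |Y| := le_abs_self Y
      _ ≤ lam0 * ∑ j, |θhat j - θ0 j| := hY
      _ = lam0 * (a + b) := by rw [hsplit]
  -- basic step: E + λ b ≤ λ₀ (a+b) + λ a
  have hkey : E + lam * b ≤ lam0 * (a + b) + lam * a := by
    have h1 : E + lam * ((∑ j ∈ S0, |θhat j|) + b)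
        ≤ Y + lam * ∑ j ∈ S0, |θ0 j| := by
      rw [← hhat, ← h0]; exact hbasic
    have h2 : (∑ j ∈ S0, |θ0 j|) - (∑ j ∈ S0, |θhat j|) ≤ a := by
      rw [← hdiff']; exact hdiff
    nlinarith [hlam0.le, hlam.le, mul_le_mul_of_nonneg_left h2 (le_of_lt (hlam0.trans hlam))]
  have hat : a ≤ Γ * t := hcompat
  have hmain : E + (lam - lam0) * (a + b) ≤ 2 * lam * Γ * t := by
    have hlampos : (0:ℝ) < lam := hlam0.trans hlam
    have : 2 * lam * a ≤ 2 * lam * (Γ * t) := by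
      apply mul_le_mul_of_nonneg_left hat
      positivity
    nlinarith
  have hFY' : (2 * lam * Γ / δ) * t ≤ G t + H (2 * lam * Γ / δ) := by
    rw [mul_comm]
    exact hFY _ _ hτ (by have hlp : (0:ℝ) < lam := hlam0.trans hlam; positivity)
  have h3 : 2 * lam * Γ * t ≤ δ * E + δ * H (2 * lam * Γ / δ) := by
    have := mul_le_mul_of_nonneg_left hFY' hδ0.le
    have heq : δ * ((2 * lam * Γ / δ) * t) = 2 * lam * Γ * t := by
      field_simp
    nlinarith [hmargin]
  rw [hsplit]
  linarith
end
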